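/- arXiv:1303.3968 — 3 statements merged into one kernel-verified Lean document; each statement's English description precedes it below -/
import Mathlib

section
/- Let p and k be positive integers with k ≥ 2p, and let d₁,…,d_k be positive integers with d₁ = ⋯ = d_p = 1 and d_{k−p+1} = ⋯ = d_k = 1. Let (a b; c d) = ∏_{i=1}^k (0 1; 1 d_i). Let L > 1 be a real number with F_p² ≥ log L. Then |b/d − 1/φ| ≤ 2/log L and |c/d − 1/φ| ≤ 2/log L, where φ = (1+√5)/2 is the golden ratio. -/
open Real

noncomputable section

/-- The generator `(0 1; 1 d)`. -/
def gen (d : ℕ) : Matrix (Fin 2) (Fin 2) ℤ := !![0, 1; 1, (d : ℤ)]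

namespace RatioAux

def P (l : List ℕ) : Matrix (Fin 2) (Fin 2) ℤ := (l.map gen).prod

lemma P_cons (d : ℕ) (t : List ℕ) : P (d :: t) = gen d * P t := by
  simp [P]

lemma P_cons01 (d : ℕ) (t : List ℕ) : P (d :: t) 0 1 = P t 1 1 := by
  simp [P_cons, gen, Matrix.mul_apply, Fin.sum_univ_two]

lemma P_cons11 (d : ℕ) (t : List ℕ) : P (d :: t) 1 1 = P t 0 1 + d * P t 1 1 := by
  simp [P_cons, gen, Matrix.mul_apply, Fin.sum_univ_two]

lemma entries (l : List ℕ) (hpos : ∀ d ∈ l, 0 < d) :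
    0 ≤ P l 0 1 ∧ P l 0 1 ≤ P l 1 1 ∧ 1 ≤ P l 1 1 := by
  induction l with
  | nil => norm_num [P, Matrix.one_apply]
  | cons d t ih =>
    obtain ⟨h1, h2, h3⟩ := ih (fun x hx => hpos x (List.mem_cons_of_mem _ hx))
    have hd : 1 ≤ (d : ℤ) := by exact_mod_cast hpos d (List.mem_cons_self ..)
    refine ⟨?_, ?_, ?_⟩
    · rw [P_cons01]; linarith
    · rw [P_cons01, P_cons11]; nlinarith
    · rw [P_cons11]; nlinarith

/-- the ratio b/d -/
def r (l : List ℕ) : ℝ := ((P l 0 1 : ℤ) : ℝ) / ((P l 1 1 : ℤ) : ℝ)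

lemma r_mem (l : List ℕ) (hpos : ∀ d ∈ l, 0 < d) : 0 ≤ r l ∧ r l ≤ 1 := by
  obtain ⟨h1, h2, h3⟩ := entries l hpos
  have hd : (0:ℝ) < ((P l 1 1 : ℤ) : ℝ) := by exact_mod_cast lt_of_lt_of_le one_pos h3
  constructor
  · exact div_nonneg (by exact_mod_cast h1) hd.le
  · rw [r, div_le_one hd]; exact_mod_cast h2

def f (x : ℝ) : ℝ := (1 + x)⁻¹

lemma r_cons_one (t : List ℕ) (hpos : ∀ d ∈ t, 0 < d) : r (1 :: t) = f (r t) := by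
  obtain ⟨h1, h2, h3⟩ := entries t hpos
  have hd : (0:ℝ) < ((P t 1 1 : ℤ) : ℝ) := by exact_mod_cast lt_of_lt_of_le one_pos h3
  have hb : (0:ℝ) ≤ ((P t 0 1 : ℤ) : ℝ) := by exact_mod_cast h1
  rw [r, P_cons01, P_cons11, f, r]
  push_cast
  rw [eq_comm, inv_eq_iff_eq_inv]
  field_simp
  ring

lemma r_take (p : ℕ) : ∀ (l : List ℕ), p ≤ l.length → (∀ d ∈ l, 0 < d) →
    (∀ d ∈ l.take p, d = 1) → r l = f^[p] (r (l.drop p)) := by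
  induction p with
  | zero => intro l _ _ _; simp
  | succ p ih =>
    intro l hlen hpos h1
    match l with
    | [] => simp at hlen
    | d :: t =>
      have hd : d = 1 := h1 d (by rw [List.take_succ_cons]; exact List.mem_cons_self ..)
      subst hd
      have hpt : ∀ x ∈ t, 0 < x := fun x hx => hpos x (List.mem_cons_of_mem _ hx)
      rw [r_cons_one t hpt, ih t (by simpa using hlen) hpt
        (fun x hx => h1 x (by rw [List.take_succ_cons]; exact List.mem_cons_of_mem _ hx))]
      rw [List.drop_succ_cons, Function.iterate_succ_apply']

lemma fib_one_le (n : ℕ) (hn : 1 ≤ n) : (1:ℝ) ≤ (Nat.fib n : ℝ) := by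
  exact_mod_cast Nat.fib_pos.mpr (by omega)

lemma iter_formula (p : ℕ) : ∀ (y : ℝ), 0 ≤ y →
    f^[p+1] y = ((Nat.fib p : ℝ) * y + Nat.fib (p+1)) / ((Nat.fib (p+1) : ℝ) * y + Nat.fib (p+2)) := by
  induction p with
  | zero =>
    intro y hy
    simp only [Function.iterate_one, Nat.fib_zero, Nat.fib_one, show Nat.fib 2 = 1 from rfl,
      Nat.cast_zero, Nat.cast_one, zero_mul, one_mul, zero_add, f]
    rw [inv_eq_one_div, add_comm 1 y]
  | succ p ih =>
    intro y hy
    have h1y : (0:ℝ) < 1 + y := by linarith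
    have hfy : 0 ≤ f y := by rw [f]; positivity
    rw [Function.iterate_succ_apply, ih (f y) hfy]
    simp only [show p+1+1 = p+2 by omega, show p+1+2 = p+3 by omega]
    have ha0 : (0:ℝ) ≤ (Nat.fib p : ℝ) := by positivity
    have hb0 : (1:ℝ) ≤ (Nat.fib (p+1) : ℝ) := fib_one_le _ (by omega)
    have e2 : (Nat.fib (p+2) : ℝ) = Nat.fib p + Nat.fib (p+1) := by
      push_cast [Nat.fib_add_two]; ring
    have e3 : (Nat.fib (p+3) : ℝ) = Nat.fib (p+1) + (Nat.fib p + Nat.fib (p+1)) := by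
      rw [show p+3 = (p+1)+2 by omega]
      rw [Nat.fib_add_two]
      push_cast [Nat.fib_add_two]; ring
    rw [e3, e2, show f y = (1+y)⁻¹ from rfl]
    have hA : (0:ℝ) < (Nat.fib (p+1) : ℝ) * (1+y)⁻¹ + ((Nat.fib p : ℝ) + Nat.fib (p+1)) := by
      have : (0:ℝ) ≤ (Nat.fib (p+1) : ℝ) * (1+y)⁻¹ := by positivity
      linarith
    have hB : (0:ℝ) < ((Nat.fib p : ℝ) + Nat.fib (p+1)) * y + ((Nat.fib (p+1):ℝ) + (Nat.fib p + Nat.fib (p+1))) := by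
      nlinarith
    rw [div_eq_div_iff hA.ne' hB.ne']
    field_simp
    ring

lemma det_fib (p : ℕ) : ((Nat.fib p : ℤ) * Nat.fib (p+2) - (Nat.fib (p+1))^2) = (-1)^(p+1) := by
  induction p with
  | zero => simp
  | succ p ih =>
    have e3 : (Nat.fib (p+3) : ℤ) = Nat.fib (p+1) + Nat.fib (p+2) := by
      rw [show p+3 = (p+1)+2 by omega]; push_cast [Nat.fib_add_two]; ring
    have e2 : (Nat.fib (p+2) : ℤ) = Nat.fib p + Nat.fib (p+1) := by
      push_cast [Nat.fib_add_two]; ring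
    have key : ((Nat.fib (p+1) : ℤ) * Nat.fib (p+3) - (Nat.fib (p+2))^2)
        = -((Nat.fib p : ℤ) * Nat.fib (p+2) - (Nat.fib (p+1))^2) := by
      rw [e3, e2]; ring
    rw [show p + 1 + 2 = p + 3 from by omega, show p+1+1 = p+2 from by omega, key, ih]
    ring

def g : ℝ := 1 / ((1 + Real.sqrt 5) / 2)

lemma sqrt5 : Real.sqrt 5 ^ 2 = 5 := Real.sq_sqrt (by norm_num)

lemma sqrt5_ge : (2:ℝ) ≤ Real.sqrt 5 := by
  nlinarith [sqrt5, Real.sqrt_nonneg 5]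

lemma g_pos : 0 < g := by
  rw [g]; positivity

lemma g_le_one : g ≤ 1 := by
  rw [g, div_le_one (by positivity)]
  nlinarith [sqrt5_ge]

lemma g_sq : g * (1 + g) = 1 := by
  rw [g]
  have h : (0:ℝ) < 1 + Real.sqrt 5 := by nlinarith [sqrt5_ge]
  field_simp
  nlinarith [sqrt5]

lemma f_g : f g = g := by
  rw [f, inv_eq_iff_eq_inv, eq_comm, inv_eq_one_div, div_eq_iff g_pos.ne']
  linear_combination -g_sq

lemma close (p : ℕ) (hp : 1 ≤ p) (l : List ℕ) (hlen : p ≤ l.length)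
    (hpos : ∀ d ∈ l, 0 < d) (h1 : ∀ d ∈ l.take p, d = 1) :
    |r l - g| ≤ 1 / ((Nat.fib (p+1) : ℝ))^2 := by
  obtain ⟨q, rfl⟩ : ∃ q, p = q + 1 := ⟨p - 1, by omega⟩
  set y := r (l.drop (q+1)) with hy_def
  obtain ⟨hy0, hy1⟩ := r_mem _ (fun d hd => hpos d (List.mem_of_mem_drop hd))
  have hrl : r l = f^[q+1] y := r_take _ l hlen hpos h1
  rw [hrl, iter_formula q y hy0]
  have hdet : ((Nat.fib q : ℝ)) * (Nat.fib (q+2) : ℝ) - ((Nat.fib (q+1) : ℝ))^2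
      = ((-1:ℝ))^(q+1) := by exact_mod_cast det_fib q
  have hcab : (Nat.fib (q+2) : ℝ) = (Nat.fib q : ℝ) + (Nat.fib (q+1) : ℝ) := by
    push_cast [Nat.fib_add_two]; ring
  set a : ℝ := (Nat.fib q : ℝ) with ha_def
  set b : ℝ := (Nat.fib (q+1) : ℝ) with hb_def
  set c : ℝ := (Nat.fib (q+2) : ℝ) with hc_def
  have ha0 : 0 ≤ a := by rw [ha_def]; positivity
  have hb1 : 1 ≤ b := fib_one_le _ (by omega)
  have hc1 : 1 ≤ c := fib_one_le _ (by omega)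
  have hby : (0:ℝ) ≤ b * y := mul_nonneg (by linarith) hy0
  have hbg : (0:ℝ) ≤ b * g := mul_nonneg (by linarith) g_pos.le
  have hB : (0:ℝ) < b * y + c := by linarith
  have hD : (0:ℝ) < b * g + c := by linarith
  have habs : |a * c - b^2| = 1 := by
    rw [hdet, abs_pow, abs_neg, abs_one, one_pow]
  have hg2 : g^2 = 1 - g := by linear_combination g_sq
  have gD : g * (b*g + c) = a*g + b := by
    rw [hcab]; linear_combination b * hg2
  have key : (a*y+b)/(b*y+c) - g = (y - g) * (a*c - b^2) / ((b*y+c)*(b*g+c)) := by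
    have e1 : (a*y+b)/(b*y+c) - g
        = ((a*y+b)*(b*g+c) - g*(b*y+c)*(b*g+c))/((b*y+c)*(b*g+c)) := by
      rw [div_sub' hB.ne', div_eq_div_iff hB.ne' (by positivity)]
      ring
    have e2 : (a*y+b)*(b*g+c) - g*(b*y+c)*(b*g+c) = (y - g) * (a*c - b^2) := by
      linear_combination (-(b*y+c)) * gD
    rw [e1, e2]
  rw [key, abs_div, abs_mul, habs, mul_one]
  have hyg : |y - g| ≤ 1 := by
    rw [abs_le]; constructor <;> [linarith [g_le_one]; linarith [g_pos]]
  have hBD : |(b*y+c)*(b*g+c)| = (b*y+c)*(b*g+c) := abs_of_pos (by positivity)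
  rw [hBD]
  have hcB : c ≤ b*y+c := by linarith
  have hcD : c ≤ b*g+c := by linarith
  have hcc : c*c ≤ (b*y+c)*(b*g+c) := mul_le_mul hcB hcD (by linarith) (by linarith)
  calc |y - g| / ((b*y+c)*(b*g+c)) ≤ 1 / (c*c) := by
        apply div_le_div₀ (by norm_num) hyg (by positivity) hcc
    _ = 1 / c^2 := by rw [sq]
    _ = 1 / ((Nat.fib (q+1+1) : ℝ))^2 := by
        rw [show q+1+1 = q+2 by omega, hc_def]

open Matrix in
lemma genT (d : ℕ) : (gen d).transpose = gen d := by
  ext i j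
  fin_cases i <;> fin_cases j <;> simp [gen]

lemma prod_reverse (l : List ℕ) : ((l.reverse.map gen).prod) = ((l.map gen).prod).transpose := by
  rw [Matrix.transpose_list_prod]
  congr 1
  rw [List.map_map, show (Matrix.transpose ∘ gen) = gen from funext genT, List.map_reverse]

end RatioAux

open RatioAux in
theorem ratio_close_to_golden_ratio
    (p k : ℕ) (hp : 1 ≤ p) (hk : 2*p ≤ k)
    (l : List ℕ) (hlen : l.length = k) (hpos : ∀ d ∈ l, 0 < d)
    (h1 : ∀ d ∈ l.take p, d = 1) (h2 : ∀ d ∈ l.drop (k - p), d = 1)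
    (L : ℝ) (hL : 1 < L) (hfib : Real.log L ≤ (Nat.fib p : ℝ)^2) :
    |(((l.map gen).prod 0 1 : ℤ) : ℝ) / (((l.map gen).prod 1 1 : ℤ) : ℝ) -
        1 / ((1 + Real.sqrt 5) / 2)| ≤ 2 / Real.log L ∧
    |(((l.map gen).prod 1 0 : ℤ) : ℝ) / (((l.map gen).prod 1 1 : ℤ) : ℝ) -
        1 / ((1 + Real.sqrt 5) / 2)| ≤ 2 / Real.log L := by
  have hlog : 0 < Real.log L := Real.log_pos hL
  have hmono : (Nat.fib p : ℝ) ≤ (Nat.fib (p+1) : ℝ) := by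
    exact_mod_cast Nat.fib_mono (by omega)
  have hfibnn : (0:ℝ) ≤ (Nat.fib p : ℝ) := by positivity
  have hf2 : Real.log L ≤ ((Nat.fib (p+1) : ℝ))^2 := le_trans hfib (by nlinarith)
  have chain : 1 / ((Nat.fib (p+1) : ℝ))^2 ≤ 2 / Real.log L := by
    calc 1 / ((Nat.fib (p+1) : ℝ))^2 ≤ 1 / Real.log L :=
          one_div_le_one_div_of_le hlog hf2
      _ ≤ 2 / Real.log L := by gcongr <;> norm_num
  constructor
  · have hc := close p hp l (by omega) hpos h1
    have : r l = (((l.map gen).prod 0 1 : ℤ) : ℝ) / (((l.map gen).prod 1 1 : ℤ) : ℝ) := rfl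
    rw [this, g] at hc
    exact le_trans hc chain
  · have h1' : ∀ d ∈ l.reverse.take p, d = 1 := by
      intro d hd
      rw [List.take_reverse, List.mem_reverse, hlen] at hd
      exact h2 d hd
    have hc := close p hp l.reverse (by simp; omega) (fun d hd => hpos d (List.mem_reverse.mp hd)) h1'
    have e01 : P l.reverse 0 1 = (l.map gen).prod 1 0 := by
      rw [P, prod_reverse]; rfl
    have e11 : P l.reverse 1 1 = (l.map gen).prod 1 1 := by
      rw [P, prod_reverse]; rfl
    rw [r, e01, e11, g] at hc
    exact le_trans hc chain

end
end

section
/- Let W be a finite set with #W > 10, let f : W → [0,∞), and let C₁ ≥ 0 be a real number such that for every subset Z ⊆ W one has ∑_{θ∈Z} f(θ) ≤ C₁·(#Z)^{1/2}. Then ∑_{θ∈W} f(θ)² ≤ 8·C₁²·log(#W). -/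
open Real

lemma sum_sq_aux (C₁ : ℝ) (hC₁ : 0 ≤ C₁) :
    ∀ (n : ℕ) {ι : Type*} (W : Finset ι), W.card = n →
    ∀ f : ι → ℝ, (∀ θ ∈ W, 0 ≤ f θ) →
    (∀ Z ⊆ W, ∑ θ ∈ Z, f θ ≤ C₁ * Real.sqrt (Z.card : ℝ)) →
    ∑ θ ∈ W, (f θ)^2 ≤ C₁^2 * ∑ k ∈ Finset.range n, (1 : ℝ)/(k+1) := by
  intro n
  induction n with
  | zero =>
    intro ι W hcard f hf hsum
    rw [Finset.card_eq_zero] at hcard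
    simp [hcard]
  | succ n ih =>
    intro ι W hcard f hf hsum
    classical
    have hne : W.Nonempty := Finset.card_pos.mp (by omega)
    obtain ⟨θ₀, hθ₀W, hθ₀min⟩ := W.exists_min_image f hne
    -- bound on f θ₀
    have hfθ₀ : 0 ≤ f θ₀ := hf θ₀ hθ₀W
    have hlow : (W.card : ℝ) * f θ₀ ≤ ∑ θ ∈ W, f θ := by
      calc (W.card : ℝ) * f θ₀ = ∑ _θ ∈ W, f θ₀ := by
            rw [Finset.sum_const, nsmul_eq_mul]
        _ ≤ ∑ θ ∈ W, f θ := Finset.sum_le_sum fun θ hθ => hθ₀min θ hθ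
    have hupp : ∑ θ ∈ W, f θ ≤ C₁ * Real.sqrt (W.card : ℝ) :=
      hsum W (le_refl W)
    have hN : ((n : ℝ) + 1) * f θ₀ ≤ C₁ * Real.sqrt ((n : ℝ) + 1) := by
      have : (W.card : ℝ) = (n : ℝ) + 1 := by rw [hcard]; push_cast; ring
      rw [← this]; exact le_trans hlow hupp
    have hsq : (f θ₀)^2 ≤ C₁^2 / ((n : ℝ) + 1) := by
      have hn1 : (0 : ℝ) < (n : ℝ) + 1 := by positivity
      have hs : Real.sqrt ((n : ℝ) + 1) ^ 2 = (n : ℝ) + 1 :=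
        Real.sq_sqrt (le_of_lt hn1)
      have hs0 : 0 ≤ Real.sqrt ((n : ℝ) + 1) := Real.sqrt_nonneg _
      rw [le_div_iff₀ hn1]
      nlinarith [mul_self_le_mul_self (by positivity : (0:ℝ) ≤ ((n:ℝ)+1) * f θ₀) hN]
    -- apply IH to W.erase θ₀
    have hcard' : (W.erase θ₀).card = n := by
      rw [Finset.card_erase_of_mem hθ₀W, hcard]; omega
    have hsub : W.erase θ₀ ⊆ W := Finset.erase_subset _ _
    have ihW := ih (W.erase θ₀) hcard' f
      (fun θ hθ => hf θ (hsub hθ))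
      (fun Z hZ => hsum Z (hZ.trans hsub))
    calc ∑ θ ∈ W, (f θ)^2
        = (f θ₀)^2 + ∑ θ ∈ W.erase θ₀, (f θ)^2 :=
          (Finset.add_sum_erase W (fun θ => (f θ)^2) hθ₀W).symm
      _ ≤ C₁^2 / ((n : ℝ) + 1) + C₁^2 * ∑ k ∈ Finset.range n, (1 : ℝ)/(k+1) := by
          exact add_le_add hsq ihW
      _ = C₁^2 * ∑ k ∈ Finset.range (n+1), (1 : ℝ)/(k+1) := by
          rw [Finset.sum_range_succ]
          push_cast
          ring

theorem sum_sq_of_sum_bound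
    {ι : Type*} (W : Finset ι) (hW : 10 < W.card)
    (f : ι → ℝ) (hf : ∀ θ ∈ W, 0 ≤ f θ)
    (C₁ : ℝ) (hC₁ : 0 ≤ C₁)
    (hsum : ∀ Z ⊆ W, ∑ θ ∈ Z, f θ ≤ C₁ * Real.sqrt (Z.card : ℝ)) :
    ∑ θ ∈ W, (f θ)^2 ≤ 8 * C₁^2 * Real.log (W.card : ℝ) := by
  set n := W.card with hn
  have h1 := sum_sq_aux C₁ hC₁ n W rfl f hf hsum
  have hharm : ∑ k ∈ Finset.range n, (1 : ℝ)/(k+1) = ((harmonic n : ℚ) : ℝ) := by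
    rw [harmonic]
    push_cast
    simp [one_div]
  have h2 : ((harmonic n : ℚ) : ℝ) ≤ 1 + Real.log n := harmonic_le_one_add_log n
  have hlog : 1 ≤ Real.log n := by
    rw [Real.le_log_iff_exp_le (by positivity : (0:ℝ) < (n:ℝ))]
    calc Real.exp 1 ≤ 3 := by
          have := Real.exp_one_lt_d9
          linarith
      _ ≤ (n : ℝ) := by
          have : (11 : ℝ) ≤ (n : ℝ) := by exact_mod_cast hW
          linarith
  have hC2 : 0 ≤ C₁^2 := sq_nonneg _
  calc ∑ θ ∈ W, (f θ)^2 ≤ C₁^2 * (1 + Real.log n) := by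
        rw [hharm] at h1
        exact h1.trans (by gcongr)
    _ ≤ C₁^2 * (8 * Real.log n) := by nlinarith
    _ = 8 * C₁^2 * Real.log n := by ring
end

section
/- Let Q ≥ 1 and let a₁, q₁, a₂, q₂ be positive integers with 1 ≤ a_i ≤ q_i ≤ Q, gcd(a_i, q_i) = 1 for i = 1, 2, and a₁/q₁ ≠ a₂/q₂. Let 0 < Y₁ ≤ Y be real numbers and let R be a real number with R > max{Q²/Y₁, 4Y, 2Q}. Then there do not exist coprime positive integers y₁, y₂ with Y₁ ≤ y_i ≤ Y and ‖y_i·(a₁/q₁ − a₂/q₂)‖ < 1/R for i = 1, 2. -/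
open Real

noncomputable section

/-- `‖x‖`: the distance from the real number `x` to the nearest integer. -/
def dni (x : ℝ) : ℝ := |x - round x|

set_option maxHeartbeats 1000000 in
theorem no_coprime_pair_close_to_integers
    (Q : ℝ) (hQ : 1 ≤ Q)
    (a₁ q₁ a₂ q₂ : ℕ)
    (ha₁ : 1 ≤ a₁) (ha₂ : 1 ≤ a₂)
    (haq₁ : a₁ ≤ q₁) (haq₂ : a₂ ≤ q₂)
    (hq₁ : (q₁ : ℝ) ≤ Q) (hq₂ : (q₂ : ℝ) ≤ Q)
    (hcop₁ : Nat.gcd a₁ q₁ = 1) (hcop₂ : Nat.gcd a₂ q₂ = 1)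
    (hne : (a₁ : ℝ) / q₁ ≠ (a₂ : ℝ) / q₂)
    (Y₁ Y R : ℝ) (hY₁ : 0 < Y₁) (hY : Y₁ ≤ Y)
    (hR : max (max (Q^2 / Y₁) (4 * Y)) (2 * Q) < R) :
    ¬ ∃ y₁ y₂ : ℕ, 0 < y₁ ∧ 0 < y₂ ∧ Nat.gcd y₁ y₂ = 1 ∧
        (Y₁ ≤ (y₁ : ℝ) ∧ (y₁ : ℝ) ≤ Y) ∧ (Y₁ ≤ (y₂ : ℝ) ∧ (y₂ : ℝ) ≤ Y) ∧
        dni ((y₁ : ℝ) * ((a₁ : ℝ) / q₁ - (a₂ : ℝ) / q₂)) < 1 / R ∧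
        dni ((y₂ : ℝ) * ((a₁ : ℝ) / q₁ - (a₂ : ℝ) / q₂)) < 1 / R := by
  rintro ⟨y₁, y₂, hy₁, hy₂, hcop, ⟨hY₁1, hY1⟩, ⟨hY₁2, hY2⟩, hd₁, hd₂⟩
  set θ : ℝ := (a₁ : ℝ) / q₁ - (a₂ : ℝ) / q₂ with hθdef
  have hq₁1 : 1 ≤ q₁ := le_trans ha₁ haq₁
  have hq₂1 : 1 ≤ q₂ := le_trans ha₂ haq₂
  have hq₁R : (0:ℝ) < q₁ := by exact_mod_cast hq₁1
  have hq₂R : (0:ℝ) < q₂ := by exact_mod_cast hq₂1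
  have hQ0 : (0:ℝ) < Q := lt_of_lt_of_le one_pos hQ
  have hR2Q : 2 * Q < R := lt_of_le_of_lt (le_max_right _ _) hR
  have hR4Y : 4 * Y < R := lt_of_le_of_lt (le_trans (le_max_right _ _) (le_max_left _ _)) hR
  have hRQY : Q ^ 2 / Y₁ < R := lt_of_le_of_lt (le_trans (le_max_left _ _) (le_max_left _ _)) hR
  have hR0 : (0:ℝ) < R := by linarith
  have hY0 : (0:ℝ) < Y := lt_of_lt_of_le hY₁ hY
  have hy₁R : (0:ℝ) < y₁ := by exact_mod_cast hy₁
  have hy₂R : (0:ℝ) < y₂ := by exact_mod_cast hy₂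
  have hy₁1 : (1:ℝ) ≤ y₁ := by exact_mod_cast hy₁
  -- numerator of θ
  set n : ℤ := (a₁ : ℤ) * q₂ - (a₂ : ℤ) * q₁ with hndef
  have hθeq : θ = (n : ℝ) / ((q₁ : ℝ) * q₂) := by
    rw [hθdef, hndef]
    field_simp
    push_cast; ring
  have hn0 : n ≠ 0 := by
    intro h
    apply hne
    rw [div_eq_div_iff hq₁R.ne' hq₂R.ne']
    have h' : ((n : ℤ) : ℝ) = 0 := by rw [h]; simp
    rw [hndef] at h'
    push_cast at h'
    linarith
  have h1n : (1:ℝ) ≤ |(n : ℝ)| := by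
    have := Int.one_le_abs hn0
    exact_mod_cast this
  have hθlb : 1 / ((q₁ : ℝ) * q₂) ≤ |θ| := by
    rw [hθeq, abs_div, abs_of_pos (mul_pos hq₁R hq₂R)]
    gcongr
  -- upper bound on |θ|
  have hfrac₁u : (a₁ : ℝ) / q₁ ≤ 1 := by
    rw [div_le_one hq₁R]; exact_mod_cast haq₁
  have hfrac₂u : (a₂ : ℝ) / q₂ ≤ 1 := by
    rw [div_le_one hq₂R]; exact_mod_cast haq₂
  have hfrac₁l : 1 / Q ≤ (a₁ : ℝ) / q₁ := by
    gcongr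
    exact_mod_cast ha₁
  have hfrac₂l : 1 / Q ≤ (a₂ : ℝ) / q₂ := by
    gcongr
    exact_mod_cast ha₂
  have hθub : |θ| ≤ 1 - 1 / Q := by
    rw [abs_le]
    constructor
    · rw [hθdef]; linarith [hfrac₂u, hfrac₁l]
    · rw [hθdef]; linarith [hfrac₁u, hfrac₂l]
  -- rounding
  set m₁ : ℤ := round ((y₁:ℝ) * θ) with hm₁def
  set m₂ : ℤ := round ((y₂:ℝ) * θ) with hm₂def
  have he₁ : |(y₁:ℝ) * θ - m₁| < 1 / R := hd₁
  have he₂ : |(y₂:ℝ) * θ - m₂| < 1 / R := hd₂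
  -- key integer identity
  have hkey : (y₂ : ℤ) * m₁ = (y₁ : ℤ) * m₂ := by
    have hcast : (((y₂ : ℤ) * m₁ - (y₁ : ℤ) * m₂ : ℤ) : ℝ)
        = (y₁:ℝ) * ((y₂:ℝ) * θ - m₂) - (y₂:ℝ) * ((y₁:ℝ) * θ - m₁) := by
      push_cast; ring
    have habs : |(((y₂ : ℤ) * m₁ - (y₁ : ℤ) * m₂ : ℤ) : ℝ)| < 1 := by
      rw [hcast]
      have h1 : |(y₁:ℝ) * ((y₂:ℝ) * θ - m₂)| ≤ Y * (1 / R) := by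
        rw [abs_mul, abs_of_pos hy₁R]
        exact mul_le_mul hY1 he₂.le (abs_nonneg _) hY0.le
      have h2 : |(y₂:ℝ) * ((y₁:ℝ) * θ - m₁)| ≤ Y * (1 / R) := by
        rw [abs_mul, abs_of_pos hy₂R]
        exact mul_le_mul hY2 he₁.le (abs_nonneg _) hY0.le
      have h3 : Y * (1 / R) < 1 / 4 := by
        rw [mul_one_div, div_lt_div_iff₀ hR0 (by norm_num : (0:ℝ) < 4)]
        linarith
      calc |(y₁:ℝ) * ((y₂:ℝ) * θ - m₂) - (y₂:ℝ) * ((y₁:ℝ) * θ - m₁)|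
          ≤ |(y₁:ℝ) * ((y₂:ℝ) * θ - m₂)| + |(y₂:ℝ) * ((y₁:ℝ) * θ - m₁)| := abs_sub _ _
        _ < 1 := by linarith
    by_contra hne'
    have hne'' : (y₂ : ℤ) * m₁ - (y₁ : ℤ) * m₂ ≠ 0 := sub_ne_zero.mpr hne'
    have := Int.one_le_abs hne''
    have : (1:ℝ) ≤ |(((y₂ : ℤ) * m₁ - (y₁ : ℤ) * m₂ : ℤ) : ℝ)| := by exact_mod_cast this
    linarith
  by_cases hm₁0 : m₁ = 0
  · -- then |y₁ θ| < 1/R, contradiction with |θ| ≥ 1/(q₁ q₂)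
    have h4 : (y₁:ℝ) * |θ| < 1 / R := by
      have := he₁
      rw [hm₁0] at this
      simpa [abs_mul, abs_of_pos hy₁R] using this
    have h5 : Y₁ * (1 / ((q₁:ℝ) * q₂)) < 1 / R := by
      calc Y₁ * (1 / ((q₁:ℝ) * q₂)) ≤ (y₁:ℝ) * |θ| :=
            mul_le_mul hY₁1 hθlb (by positivity) hy₁R.le
        _ < 1 / R := h4
    have h6 : R * Y₁ < (q₁:ℝ) * q₂ := by
      rw [mul_one_div, div_lt_div_iff₀ (mul_pos hq₁R hq₂R) hR0] at h5
      linarith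
    have h7 : (q₁:ℝ) * q₂ ≤ Q ^ 2 := by nlinarith
    have h8 : Q ^ 2 < R * Y₁ := by
      rw [div_lt_iff₀ hY₁] at hRQY
      linarith only [hRQY]
    linarith only [h6, h7, h8]
  · -- y₁ ∣ m₁, so |m₁| ≥ y₁
    have hcopZ : IsCoprime (y₁ : ℤ) (y₂ : ℤ) := by
      rw [Int.isCoprime_iff_gcd_eq_one, Int.gcd_natCast_natCast]
      exact hcop
    have hdvd : (y₁ : ℤ) ∣ m₁ := hcopZ.dvd_of_dvd_mul_left ⟨m₂, hkey⟩
    have hle : (y₁ : ℤ) ≤ |m₁| :=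
      Int.le_of_dvd (abs_pos.mpr hm₁0) ((dvd_abs _ _).mpr hdvd)
    have hleR : (y₁:ℝ) ≤ |(m₁:ℝ)| := by
      have : ((y₁:ℤ):ℝ) ≤ (|m₁| : ℝ) := by exact_mod_cast hle
      simpa using this
    have h9 : |(m₁:ℝ)| ≤ |(y₁:ℝ) * θ| + |(y₁:ℝ) * θ - m₁| := by
      have := abs_sub_abs_le_abs_sub ((y₁:ℝ) * θ) ((y₁:ℝ) * θ - (m₁:ℝ))
      have h := abs_sub ((y₁:ℝ) * θ) ((y₁:ℝ) * θ - (m₁:ℝ))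
      calc |(m₁:ℝ)| = |(y₁:ℝ) * θ - ((y₁:ℝ) * θ - m₁)| := by congr 1; ring
        _ ≤ |(y₁:ℝ) * θ| + |(y₁:ℝ) * θ - m₁| := abs_sub _ _
    have h10 : (y₁:ℝ) < (y₁:ℝ) * (1 - 1/Q) + 1 / R := by
      have hyt : |(y₁:ℝ) * θ| ≤ (y₁:ℝ) * (1 - 1/Q) := by
        rw [abs_mul, abs_of_pos hy₁R]
        exact mul_le_mul_of_nonneg_left hθub hy₁R.le
      calc (y₁:ℝ) ≤ |(m₁:ℝ)| := hleR
        _ ≤ |(y₁:ℝ) * θ| + |(y₁:ℝ) * θ - m₁| := h9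
        _ < (y₁:ℝ) * (1 - 1/Q) + 1 / R := by linarith [he₁, hyt]
    -- so y₁/Q < 1/R, but R > 2Q and y₁ ≥ 1
    have h11 : (y₁:ℝ) / Q < 1 / R := by
      have h10' := h10
      have hexp : (y₁:ℝ) * (1 - 1/Q) = (y₁:ℝ) - (y₁:ℝ)/Q := by ring
      rw [hexp] at h10'
      linarith only [h10']
    rw [div_lt_div_iff₀ hQ0 hR0] at h11
    have h12 : R ≤ (y₁:ℝ) * R := le_mul_of_one_le_left hR0.le hy₁1
    have h13 : (1:ℝ) * Q = Q := one_mul Q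
    linarith only [h11, h12, h13, hR2Q, hQ0]
end
end
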